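/- For all real a > 0 and b ≥ 0, ∫₀^∞ (a t² + b/t²) e^{−(a t² + b/t²)} dt = (√π / (4√a)) · (1 + 4√(ab)) · e^{−2√(ab)}. -/

import Mathlib

open MeasureTheory Set

open Real Filter

private lemma int_f0 {a b : ℝ} (ha : 0 < a) (hb : 0 ≤ b) :
    IntegrableOn (fun t : ℝ => Real.exp (-(a * t ^ 2 + b / t ^ 2))) (Ioi 0) := by
  refine ((integrable_exp_neg_mul_sq ha).integrableOn).mono' (Measurable.aestronglyMeasurable (by measurability)) ?_
  refine Eventually.of_forall fun t => ?_
  rw [Real.norm_eq_abs, abs_of_pos (Real.exp_pos _)]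
  apply Real.exp_le_exp.2
  have : 0 ≤ b / t ^ 2 := div_nonneg hb (sq_nonneg t)
  nlinarith

private lemma int_f2 {a b : ℝ} (ha : 0 < a) (hb : 0 ≤ b) :
    IntegrableOn (fun t : ℝ => b / t ^ 2 * Real.exp (-(a * t ^ 2 + b / t ^ 2))) (Ioi 0) := by
  refine ((integrable_exp_neg_mul_sq ha).integrableOn).mono' (Measurable.aestronglyMeasurable (by measurability)) ?_
  refine Eventually.of_forall fun t => ?_
  have hx : 0 ≤ b / t ^ 2 := div_nonneg hb (sq_nonneg t)
  rw [Real.norm_eq_abs, abs_of_nonneg (mul_nonneg hx (Real.exp_pos _).le)]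
  have key : b / t ^ 2 * Real.exp (-(b / t ^ 2)) ≤ 1 := by
    have h1 := Real.add_one_le_exp (b / t ^ 2)
    have h2 := Real.exp_pos (b / t ^ 2)
    rw [Real.exp_neg, ← div_eq_mul_inv, div_le_one h2]
    linarith
  calc b / t ^ 2 * Real.exp (-(a * t ^ 2 + b / t ^ 2))
      = (b / t ^ 2 * Real.exp (-(b / t ^ 2))) * Real.exp (-a * t ^ 2) := by
        rw [show -(a * t ^ 2 + b / t ^ 2) = -(b / t ^ 2) + -a * t ^ 2 by ring, Real.exp_add,
          mul_assoc]
    _ ≤ 1 * Real.exp (-a * t ^ 2) := by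
        exact mul_le_mul_of_nonneg_right key (Real.exp_pos _).le
    _ = Real.exp (-a * t ^ 2) := one_mul _

private lemma int_f1 {a b : ℝ} (ha : 0 < a) (hb : 0 ≤ b) :
    IntegrableOn (fun t : ℝ => a * t ^ 2 * Real.exp (-(a * t ^ 2 + b / t ^ 2))) (Ioi 0) := by
  have base : IntegrableOn (fun t : ℝ => a * (t ^ 2 * Real.exp (-a * t ^ 2))) (Ioi 0) := by
    refine ((integrableOn_rpow_mul_exp_neg_mul_sq ha (s := 2) (by norm_num)).congr_fun
      (fun x hx => ?_) measurableSet_Ioi).const_mul a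
    rw [show ((2:ℝ) = ((2:ℕ):ℝ)) by norm_num, Real.rpow_natCast]
  refine base.mono' (Measurable.aestronglyMeasurable (by measurability)) ?_
  filter_upwards [self_mem_ae_restrict measurableSet_Ioi] with t ht
  have ht0 : (0:ℝ) < t := ht
  have hx : 0 ≤ b / t ^ 2 := div_nonneg hb (sq_nonneg t)
  rw [Real.norm_eq_abs, abs_of_nonneg (by positivity)]
  have : Real.exp (-(a * t ^ 2 + b / t ^ 2)) ≤ Real.exp (-a * t ^ 2) := by
    apply Real.exp_le_exp.2; nlinarith
  nlinarith [mul_le_mul_of_nonneg_left this (mul_nonneg ha.le (sq_nonneg t))]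

private lemma integral_inv_change {c : ℝ} (hc : 0 < c) (g : ℝ → ℝ) :
    ∫ x in Ioi (0:ℝ), g x = ∫ t in Ioi (0:ℝ), (c / t ^ 2) * g (c / t) := by
  have himg : (fun t : ℝ => c / t) '' Ioi 0 = Ioi 0 := by
    ext y
    constructor
    · rintro ⟨t, ht, rfl⟩; exact div_pos hc ht
    · intro hy; exact ⟨c / y, div_pos hc hy, by field_simp⟩
  have hderiv : ∀ t ∈ Ioi (0:ℝ), HasDerivWithinAt (fun t : ℝ => c / t) (-(c / t ^ 2)) (Ioi 0) t := by
    intro t ht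
    have h := ((hasDerivAt_inv (ne_of_gt ht)).const_mul c).hasDerivWithinAt (s := Ioi 0)
    simp only [div_eq_mul_inv]
    refine h.congr_deriv ?_
    ring
  have hinj : InjOn (fun t : ℝ => c / t) (Ioi 0) := by
    intro s hs t ht hst
    have hs0 : (0:ℝ) < s := hs
    have ht0 : (0:ℝ) < t := ht
    field_simp at hst
    exact hst.symm
  calc ∫ x in Ioi (0:ℝ), g x = ∫ x in (fun t : ℝ => c / t) '' Ioi 0, g x := by rw [himg]
    _ = ∫ t in Ioi (0:ℝ), |(-(c / t ^ 2))| • g (c / t) :=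
        integral_image_eq_integral_abs_deriv_smul measurableSet_Ioi hderiv hinj g
    _ = ∫ t in Ioi (0:ℝ), (c / t ^ 2) * g (c / t) := by
        refine setIntegral_congr_fun measurableSet_Ioi fun t ht => ?_
        have ht0 : (0:ℝ) < t := ht
        rw [abs_neg, abs_of_nonneg (by positivity), smul_eq_mul]

private lemma f2_eq {a b : ℝ} (ha : 0 < a) (hb : 0 < b) :
    ∫ t in Ioi (0:ℝ), b / t ^ 2 * Real.exp (-(a * t ^ 2 + b / t ^ 2))
      = Real.sqrt (a * b) * ∫ t in Ioi (0:ℝ), Real.exp (-(a * t ^ 2 + b / t ^ 2)) := by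
  set c := Real.sqrt b / Real.sqrt a with hc
  have hsa : (0:ℝ) < Real.sqrt a := Real.sqrt_pos.2 ha
  have hsb : (0:ℝ) < Real.sqrt b := Real.sqrt_pos.2 hb
  have hc0 : 0 < c := div_pos hsb hsa
  have key := integral_inv_change hc0 (fun t => Real.exp (-(a * t ^ 2 + b / t ^ 2)))
  have hpoint : EqOn (fun t : ℝ => c / t ^ 2 * Real.exp (-(a * (c/t) ^ 2 + b / (c/t) ^ 2)))
      (fun t : ℝ => (c / b) * (b / t ^ 2 * Real.exp (-(a * t ^ 2 + b / t ^ 2)))) (Ioi 0) := by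
    intro t ht
    have ht0 : (0:ℝ) < t := ht
    have hca : c ^ 2 = b / a := by
      rw [hc, div_pow, Real.sq_sqrt hb.le, Real.sq_sqrt ha.le]
    have hφ : a * (c/t) ^ 2 + b / (c/t) ^ 2 = a * t ^ 2 + b / t ^ 2 := by
      rw [div_pow, hca]
      field_simp
      ring
    simp only
    rw [hφ]
    field_simp
  rw [setIntegral_congr_fun measurableSet_Ioi hpoint, MeasureTheory.integral_const_mul] at key
  have hbc : Real.sqrt (a * b) * (c / b) = 1 := by
    rw [hc, Real.sqrt_mul ha.le]
    field_simp
    nlinarith [Real.mul_self_sqrt hb.le]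
  calc ∫ t in Ioi (0:ℝ), b / t ^ 2 * Real.exp (-(a * t ^ 2 + b / t ^ 2))
      = (Real.sqrt (a * b) * (c / b)) * ∫ t in Ioi (0:ℝ), b / t ^ 2 * Real.exp (-(a * t ^ 2 + b / t ^ 2)) := by
        rw [hbc, one_mul]
    _ = Real.sqrt (a * b) * ∫ t in Ioi (0:ℝ), Real.exp (-(a * t ^ 2 + b / t ^ 2)) := by
        rw [mul_assoc, ← key]

private lemma J_val {a b : ℝ} (ha : 0 < a) (hb : 0 < b) :
    ∫ t in Ioi (0:ℝ), Real.exp (-(a * t ^ 2 + b / t ^ 2))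
      = Real.sqrt Real.pi / (2 * Real.sqrt a) * Real.exp (-(2 * Real.sqrt (a * b))) := by
  set p := Real.sqrt a with hp
  set q := Real.sqrt b with hq
  have hp0 : 0 < p := Real.sqrt_pos.2 ha
  have hq0 : 0 < q := Real.sqrt_pos.2 hb
  have hpa : p ^ 2 = a := Real.sq_sqrt ha.le
  have hqb : q ^ 2 = b := Real.sq_sqrt hb.le
  set u : ℝ → ℝ := fun t => p * t - q / t with hu
  have hu_deriv : ∀ t ∈ Ioi (0:ℝ), HasDerivWithinAt u (p + q / t ^ 2) (Ioi 0) t := by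
    intro t ht
    have ht0 : (0:ℝ) < t := ht
    have h1 : HasDerivAt (fun t : ℝ => p * t) p t := by
      simpa using (hasDerivAt_id t).const_mul p
    have h2 : HasDerivAt (fun t : ℝ => q / t) (-(q / t ^ 2)) t := by
      have h := (hasDerivAt_inv ht0.ne').const_mul q
      simp only [div_eq_mul_inv]
      refine h.congr_deriv ?_
      ring
    have := (h1.sub h2).hasDerivWithinAt (s := Ioi 0)
    refine this.congr_deriv ?_
    ring
  have hu_inj : InjOn u (Ioi 0) := by
    have : StrictMonoOn u (Ioi 0) := by
      intro s hs t ht hst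
      have hs0 : (0:ℝ) < s := hs
      have ht0 : (0:ℝ) < t := ht
      have h1 : p * s < p * t := by nlinarith
      have h2 : q / t < q / s := by
        apply div_lt_div_of_pos_left hq0 hs0 hst
      simp only [hu]
      linarith
    exact this.injOn
  have himg : u '' Ioi 0 = univ := by
    apply eq_univ_of_forall
    intro y
    have hD : (0:ℝ) < p + |y| + q := by positivity
    set t₁ : ℝ := q / (p + |y| + q) with ht₁
    set t₂ : ℝ := max 1 ((y + q) / p) with ht₂
    have ht₁0 : 0 < t₁ := div_pos hq0 hD
    have ht₁1 : t₁ ≤ 1 := by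
      rw [ht₁, div_le_one hD]
      nlinarith [abs_nonneg y]
    have ht₁₂ : t₁ ≤ t₂ := le_trans ht₁1 (le_max_left _ _)
    have hu₁ : u t₁ ≤ y := by
      have hqt : q / t₁ = p + |y| + q := by
        rw [ht₁]
        field_simp
      have hpt : p * t₁ ≤ q := by
        rw [ht₁, show p * (q / (p + |y| + q)) = p * q / (p + |y| + q) by ring,
          div_le_iff₀ hD]
        nlinarith [abs_nonneg y]
      have := neg_abs_le y
      simp only [hu]
      rw [hqt]
      linarith
    have hu₂ : y ≤ u t₂ := by
      have h2a : (1:ℝ) ≤ t₂ := le_max_left _ _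
      have ht₂0 : (0:ℝ) < t₂ := lt_of_lt_of_le one_pos h2a
      have hqt : q / t₂ ≤ q := div_le_self hq0.le h2a
      have hpt : y + q ≤ p * t₂ := by
        have := le_max_right 1 ((y + q) / p)
        rw [div_le_iff₀ hp0] at this
        linarith [this]
      simp only [hu]
      linarith
    have hconn : ContinuousOn u (Icc t₁ t₂) := by
      intro t ht
      have ht0 : (0:ℝ) < t := lt_of_lt_of_le ht₁0 ht.1
      exact ((hu_deriv t ht0).mono (fun x hx => lt_of_lt_of_le ht₁0 hx.1 : Icc t₁ t₂ ⊆ Ioi 0)).continuousWithinAt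
    have hy : y ∈ Icc (u t₁) (u t₂) := ⟨hu₁, hu₂⟩
    have hsub := intermediate_value_Icc ht₁₂ hconn hy
    exact image_mono (f := u) (fun x hx => lt_of_lt_of_le ht₁0 hx.1 : Icc t₁ t₂ ⊆ Ioi 0) hsub
  set J := ∫ t in Ioi (0:ℝ), Real.exp (-(a * t ^ 2 + b / t ^ 2)) with hJ
  have key := integral_image_eq_integral_abs_deriv_smul measurableSet_Ioi hu_deriv hu_inj
    (fun x => Real.exp (-x ^ 2))
  rw [himg, Measure.restrict_univ] at key
  have hgauss : ∫ x : ℝ, Real.exp (-x ^ 2) = Real.sqrt Real.pi := by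
    have h := integral_gaussian 1
    simpa using h
  rw [hgauss] at key
  have hpoint : EqOn (fun t : ℝ => |p + q / t ^ 2| • Real.exp (-(u t) ^ 2))
      (fun t : ℝ => Real.exp (2 * (p * q)) * (p * Real.exp (-(a * t ^ 2 + b / t ^ 2))
        + (1 / q) * (b / t ^ 2 * Real.exp (-(a * t ^ 2 + b / t ^ 2))))) (Ioi 0) := by
    intro t ht
    have ht0 : (0:ℝ) < t := ht
    have habs : |p + q / t ^ 2| = p + q / t ^ 2 := abs_of_pos (by positivity)
    have hsq : (u t) ^ 2 = a * t ^ 2 + b / t ^ 2 - 2 * (p * q) := by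
      have h1 : (u t) ^ 2 = p ^ 2 * t ^ 2 - 2 * (p * q) + q ^ 2 / t ^ 2 := by
        simp only [hu]
        field_simp
        ring
      rw [h1, hpa, hqb]; ring
    simp only [smul_eq_mul, habs, hsq]
    rw [show -(a * t ^ 2 + b / t ^ 2 - 2 * (p * q)) = 2 * (p * q) + -(a * t ^ 2 + b / t ^ 2)
      by ring, Real.exp_add]
    have hqq : q / t ^ 2 = (1 / q) * (b / t ^ 2) := by
      rw [← hqb]; field_simp
    rw [hqq]
    ring
  rw [setIntegral_congr_fun measurableSet_Ioi hpoint, MeasureTheory.integral_const_mul,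
    integral_add ((int_f0 ha hb.le).const_mul p) ((int_f2 ha hb.le).const_mul (1/q)),
    MeasureTheory.integral_const_mul, MeasureTheory.integral_const_mul,
    f2_eq ha hb] at key
  have hab : Real.sqrt (a * b) = p * q := Real.sqrt_mul ha.le b
  rw [hab] at key ⊢
  rw [← hJ] at key
  -- key : √π = exp (2pq) * (p * J + 1/q * (p*q*J))
  have hkey2 : Real.sqrt Real.pi = Real.exp (2 * (p * q)) * (2 * p * J) := by
    rw [key]
    have hq1 : (1:ℝ) / q * (p * q * J) = p * J := by field_simp
    rw [hq1]
    ring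
  have hepos := Real.exp_pos (2 * (p * q))
  rw [Real.exp_neg]
  rw [hkey2]
  field_simp

private lemma ibp {a b : ℝ} (ha : 0 < a) (hb : 0 ≤ b) :
    ∫ t in Ioi (0:ℝ), a * t ^ 2 * Real.exp (-(a * t ^ 2 + b / t ^ 2))
      = (∫ t in Ioi (0:ℝ), b / t ^ 2 * Real.exp (-(a * t ^ 2 + b / t ^ 2)))
        + (1 / 2) * ∫ t in Ioi (0:ℝ), Real.exp (-(a * t ^ 2 + b / t ^ 2)) := by
  set G : ℝ → ℝ := fun t => -(t / 2) * Real.exp (-(a * t ^ 2 + b / t ^ 2)) with hG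
  set F : ℝ → ℝ := fun t =>
    a * t ^ 2 * Real.exp (-(a * t ^ 2 + b / t ^ 2))
      - b / t ^ 2 * Real.exp (-(a * t ^ 2 + b / t ^ 2))
      - (1 / 2) * Real.exp (-(a * t ^ 2 + b / t ^ 2)) with hF
  have hderiv : ∀ t ∈ Ioi (0:ℝ), HasDerivAt G (F t) t := by
    intro t ht
    have ht0 : (0:ℝ) < t := ht
    have hφ : HasDerivAt (fun t : ℝ => a * t ^ 2 + b / t ^ 2)
        (2 * a * t - 2 * b / t ^ 3) t := by
      have h1 : HasDerivAt (fun t : ℝ => a * t ^ 2) (a * (2 * t)) t := by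
        simpa using (hasDerivAt_pow 2 t).const_mul a
      have h2 : HasDerivAt (fun t : ℝ => b / t ^ 2)
          (b * (-(2 * t ^ 1) / (t ^ 2) ^ 2)) t := by
        simpa [div_eq_mul_inv] using
          (((hasDerivAt_pow 2 t).inv (pow_ne_zero 2 ht0.ne')).const_mul b)
      have := h1.add h2
      refine this.congr_deriv ?_
      field_simp
      ring
    have hexp := hφ.neg.exp
    have hid : HasDerivAt (fun t : ℝ => -(t / 2)) (-(1 / 2)) t := by
      exact ((hasDerivAt_id t).div_const 2).neg
    have := hid.mul hexp
    refine this.congr_deriv ?_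
    simp only [hF, Pi.neg_apply]
    field_simp
    ring
  have hcont : ContinuousWithinAt G (Ici 0) 0 := by
    have hG0 : G 0 = 0 := by simp [hG]
    unfold ContinuousWithinAt
    rw [hG0]
    apply squeeze_zero_norm' (a := fun t : ℝ => t / 2)
    · filter_upwards [self_mem_nhdsWithin] with t (ht : t ∈ Ici (0:ℝ))
      have ht0 : (0:ℝ) ≤ t := ht
      have hφ0 : 0 ≤ a * t ^ 2 + b / t ^ 2 := by positivity
      have he : Real.exp (-(a * t ^ 2 + b / t ^ 2)) ≤ 1 := by
        rw [show (1:ℝ) = Real.exp 0 from (Real.exp_zero).symm]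
        exact Real.exp_le_exp.2 (by linarith)
      rw [hG, Real.norm_eq_abs]
      rw [abs_mul, abs_neg, abs_of_nonneg (by positivity : (0:ℝ) ≤ t / 2),
        abs_of_pos (Real.exp_pos _)]
      nlinarith [Real.exp_pos (-(a * t ^ 2 + b / t ^ 2))]
    · have : Tendsto (fun t : ℝ => t / 2) (nhds 0) (nhds 0) := by
        simpa using (continuous_id.tendsto (0:ℝ)).div_const 2
      exact this.mono_left nhdsWithin_le_nhds
  have htop : Tendsto G atTop (nhds 0) := by
    apply squeeze_zero_norm' (a := fun t : ℝ => t ^ (1:ℝ) * Real.exp (-a * t) / 2)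
    · filter_upwards [eventually_ge_atTop (1:ℝ)] with t ht1
      have ht0 : (0:ℝ) < t := lt_of_lt_of_le one_pos ht1
      have hbd : -(a * t ^ 2 + b / t ^ 2) ≤ -a * t := by
        have h1 : 0 ≤ b / t ^ 2 := div_nonneg hb (sq_nonneg t)
        have h2 : t ≤ t ^ 2 := by nlinarith
        nlinarith [mul_le_mul_of_nonneg_left h2 ha.le]
      have he : Real.exp (-(a * t ^ 2 + b / t ^ 2)) ≤ Real.exp (-a * t) :=
        Real.exp_le_exp.2 hbd
      rw [hG, Real.norm_eq_abs, abs_mul, abs_neg,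
        abs_of_nonneg (by positivity : (0:ℝ) ≤ t / 2), abs_of_pos (Real.exp_pos _),
        Real.rpow_one]
      nlinarith [Real.exp_pos (-(a * t ^ 2 + b / t ^ 2))]
    · simpa using (tendsto_rpow_mul_exp_neg_mul_atTop_nhds_zero 1 a ha).div_const 2
  have hi1 := int_f1 ha hb
  have hi2 := int_f2 ha hb
  have hi0 : IntegrableOn (fun t : ℝ => (1/2) * Real.exp (-(a * t ^ 2 + b / t ^ 2))) (Ioi 0) :=
    (int_f0 ha hb).const_mul (1/2)
  have hi12 : IntegrableOn (fun t : ℝ =>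
      a * t ^ 2 * Real.exp (-(a * t ^ 2 + b / t ^ 2))
        - b / t ^ 2 * Real.exp (-(a * t ^ 2 + b / t ^ 2))) (Ioi 0) := hi1.sub hi2
  have hFint : IntegrableOn F (Ioi 0) := hi12.sub hi0
  have hzero := integral_Ioi_of_hasDerivAt_of_tendsto hcont hderiv hFint htop
  have hG0 : G 0 = 0 := by simp [hG]
  rw [hG0, sub_zero] at hzero
  have hzero2 : ∫ t in Ioi (0:ℝ),
      ((a * t ^ 2 * Real.exp (-(a * t ^ 2 + b / t ^ 2))
        - b / t ^ 2 * Real.exp (-(a * t ^ 2 + b / t ^ 2)))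
        - (1/2) * Real.exp (-(a * t ^ 2 + b / t ^ 2))) = 0 := hzero
  rw [integral_sub hi12 hi0, integral_sub hi1 hi2, MeasureTheory.integral_const_mul,
    sub_eq_zero] at hzero2
  linarith [hzero2]

/-- For all real `a > 0` and `b ≥ 0`,
`∫₀^∞ (a t² + b/t²) e^{−(a t² + b/t²)} dt = (√π/(4√a)) (1 + 4√(ab)) e^{−2√(ab)}`. -/
theorem stmt_4 (a b : ℝ) (ha : 0 < a) (hb : 0 ≤ b) :
    (∫ t in Ioi (0:ℝ), (a * t ^ 2 + b / t ^ 2) * Real.exp (-(a * t ^ 2 + b / t ^ 2))) =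
      Real.sqrt Real.pi / (4 * Real.sqrt a) * (1 + 4 * Real.sqrt (a * b)) *
        Real.exp (-(2 * Real.sqrt (a * b))) := by
  have hi1 := int_f1 ha hb
  have hi2 := int_f2 ha hb
  have hsplit : (∫ t in Ioi (0:ℝ), (a * t ^ 2 + b / t ^ 2) * Real.exp (-(a * t ^ 2 + b / t ^ 2)))
      = (∫ t in Ioi (0:ℝ), a * t ^ 2 * Real.exp (-(a * t ^ 2 + b / t ^ 2)))
        + ∫ t in Ioi (0:ℝ), b / t ^ 2 * Real.exp (-(a * t ^ 2 + b / t ^ 2)) := by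
    rw [← integral_add hi1 hi2]
    exact setIntegral_congr_fun measurableSet_Ioi fun t ht => by ring
  rw [hsplit, ibp ha hb]
  rcases hb.eq_or_lt with heq | hb'
  · subst heq
    have hz : (∫ t in Ioi (0:ℝ), (0:ℝ) / t ^ 2 * Real.exp (-(a * t ^ 2 + 0 / t ^ 2))) = 0 := by
      simp
    have hJ0 : (∫ t in Ioi (0:ℝ), Real.exp (-(a * t ^ 2 + 0 / t ^ 2)))
        = Real.sqrt Real.pi / (2 * Real.sqrt a) := by
      simp only [zero_div, add_zero, ← neg_mul]
      rw [integral_gaussian_Ioi, Real.sqrt_div Real.pi_nonneg, div_div, mul_comm]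
    rw [hz, hJ0]
    simp [Real.sqrt_zero]
    ring
  · rw [f2_eq ha hb', J_val ha hb']
    ring
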